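/- In the Black-Scholes setting, for fixed S, T, σ > 0 and r, q ∈ ℝ, and for any strikes 0 < K1 < K2 < K3, the butterfly-spread no-arbitrage condition holds: (K3 − K2)·C(S,K1,T,r,q,σ) − (K3 − K1)·C(S,K2,T,r,q,σ) + (K2 − K1)·C(S,K3,T,r,q,σ) > 0. -/

import Mathlib

open Real MeasureTheory

/-- Standard normal density. -/
noncomputable def stdNormalPdf (x : ℝ) : ℝ := Real.exp (-x ^ 2 / 2) / Real.sqrt (2 * Real.pi)

/-- Standard normal cumulative distribution function. -/
noncomputable def stdNormalCdf (x : ℝ) : ℝ := ∫ t in Set.Iic x, stdNormalPdf t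

/-- Black-Scholes `d₁`. -/
noncomputable def bsD1 (S K T r q σ : ℝ) : ℝ :=
  (Real.log (S / K) + (r - q + σ ^ 2 / 2) * T) / (σ * Real.sqrt T)

/-- Black-Scholes `d₂`. -/
noncomputable def bsD2 (S K T r q σ : ℝ) : ℝ := bsD1 S K T r q σ - σ * Real.sqrt T

/-- Black-Scholes call option price. -/
noncomputable def bsCall (S K T r q σ : ℝ) : ℝ :=
  S * Real.exp (-q * T) * stdNormalCdf (bsD1 S K T r q σ) -
    K * Real.exp (-r * T) * stdNormalCdf (bsD2 S K T r q σ)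

lemma pdf_pos (x : ℝ) : 0 < stdNormalPdf x :=
  div_pos (Real.exp_pos _) (Real.sqrt_pos.2 (by positivity))

lemma pdf_cont : Continuous stdNormalPdf := by
  unfold stdNormalPdf; fun_prop

lemma pdf_integrable : Integrable stdNormalPdf := by
  have h : Integrable fun x : ℝ => Real.exp (-(1/2) * x ^ 2) :=
    integrable_exp_neg_mul_sq (by norm_num)
  have := h.div_const (Real.sqrt (2 * Real.pi))
  convert this using 2 with x
  unfold stdNormalPdf
  ring_nf

lemma cdf_hasDeriv (x : ℝ) : HasDerivAt stdNormalCdf (stdNormalPdf x) x := by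
  have key : ∀ y : ℝ, stdNormalCdf y = stdNormalCdf 0 + ∫ t in (0:ℝ)..y, stdNormalPdf t := by
    intro y
    rw [← intervalIntegral.integral_Iic_sub_Iic pdf_integrable.integrableOn
      pdf_integrable.integrableOn]
    unfold stdNormalCdf; ring
  have h : HasDerivAt (fun y => stdNormalCdf 0 + ∫ t in (0:ℝ)..y, stdNormalPdf t)
      (stdNormalPdf x) x := by
    have := intervalIntegral.integral_hasDerivAt_right
      (pdf_integrable.intervalIntegrable (a:=0) (b:=x))
      pdf_cont.aestronglyMeasurable.stronglyMeasurableAtFilter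
      pdf_cont.continuousAt
    exact this.const_add _
  exact h.congr_of_eventuallyEq (Filter.Eventually.of_forall key)

lemma cdf_strictMono : StrictMono stdNormalCdf := by
  intro a b hab
  have : stdNormalCdf b - stdNormalCdf a = ∫ t in a..b, stdNormalPdf t :=
    intervalIntegral.integral_Iic_sub_Iic pdf_integrable.integrableOn
      pdf_integrable.integrableOn
  have hpos : 0 < ∫ t in a..b, stdNormalPdf t :=
    intervalIntegral.intervalIntegral_pos_of_pos
      (pdf_integrable.intervalIntegrable) pdf_pos hab
  linarith

lemma bs_identity (S T σ r q K : ℝ) (hS : 0 < S) (hT : 0 < T) (hσ : 0 < σ) (hK : 0 < K) :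
    S * Real.exp (-q * T) * stdNormalPdf (bsD1 S K T r q σ) =
      K * Real.exp (-r * T) * stdNormalPdf (bsD2 S K T r q σ) := by
  have hcpos : 0 < σ * Real.sqrt T := mul_pos hσ (Real.sqrt_pos.2 hT)
  have hc : (σ * Real.sqrt T) ^ 2 = σ ^ 2 * T := by rw [mul_pow, sq_sqrt hT.le]
  set c := σ * Real.sqrt T with hcdef
  set L := Real.log (S / K) with hL
  have hd1 : bsD1 S K T r q σ = (L + (r - q + σ ^ 2 / 2) * T) / c := rfl
  have hd2 : bsD2 S K T r q σ = bsD1 S K T r q σ - c := rfl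
  have hd1c : bsD1 S K T r q σ * c = L + (r - q + σ ^ 2 / 2) * T := by
    rw [hd1]; field_simp
  have hsq : -(bsD1 S K T r q σ) ^ 2 / 2 =
      -(bsD2 S K T r q σ) ^ 2 / 2 - (L + (r - q) * T) := by
    rw [hd2]; linear_combination -hd1c + hc / 2
  have hexpL : Real.exp L = S / K := Real.exp_log (by positivity)
  have key : Real.exp (-(bsD1 S K T r q σ) ^ 2 / 2) =
      Real.exp (-(bsD2 S K T r q σ) ^ 2 / 2) * (K / S) * Real.exp ((q - r) * T) := by
    rw [hsq, sub_eq_add_neg, Real.exp_add, neg_add, Real.exp_add, Real.exp_neg, hexpL,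
      inv_div]
    ring_nf
  have key2 : Real.exp (-q * T) * Real.exp ((q - r) * T) = Real.exp (-r * T) := by
    rw [← Real.exp_add]; ring_nf
  have h2 : S * Real.exp (-q * T) *
      (Real.exp (-(bsD2 S K T r q σ) ^ 2 / 2) * (K / S) * Real.exp ((q - r) * T)) =
      K * Real.exp (-r * T) * Real.exp (-(bsD2 S K T r q σ) ^ 2 / 2) := by
    rw [← key2]; field_simp
  unfold stdNormalPdf
  rw [key, mul_div_assoc, ← mul_div_assoc, ← mul_div_assoc, h2, mul_div_assoc]

lemma bsCall_hasDeriv (S T σ r q : ℝ) (hS : 0 < S) (hT : 0 < T) (hσ : 0 < σ)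
    {K : ℝ} (hK : 0 < K) :
    HasDerivAt (fun k => bsCall S k T r q σ)
      (-(Real.exp (-r * T) * stdNormalCdf (bsD2 S K T r q σ))) K := by
  have hcpos : 0 < σ * Real.sqrt T := mul_pos hσ (Real.sqrt_pos.2 hT)
  set c := σ * Real.sqrt T with hcdef
  set a := r - q + σ ^ 2 / 2 with ha
  -- derivative of d1 in K
  have hd1 : HasDerivAt (fun k => bsD1 S k T r q σ) (-K⁻¹ / c) K := by
    have hg : HasDerivAt (fun k : ℝ => (Real.log S - Real.log k + a * T) / c)
        ((0 - K⁻¹ + 0) / c) K := by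
      exact (((hasDerivAt_const K (Real.log S)).sub (Real.hasDerivAt_log hK.ne')).add
        (hasDerivAt_const K (a * T))).div_const c
    have hev : (fun k : ℝ => (Real.log S - Real.log k + a * T) / c)
        =ᶠ[nhds K] fun k => bsD1 S k T r q σ := by
      filter_upwards [eventually_gt_nhds hK] with k hk
      unfold bsD1
      rw [Real.log_div hS.ne' hk.ne']
    have := hg.congr_of_eventuallyEq hev.symm
    rw [show -K⁻¹ / c = (0 - K⁻¹ + 0) / c by ring]; exact this
  have hd2 : HasDerivAt (fun k => bsD2 S k T r q σ) (-K⁻¹ / c) K := by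
    unfold bsD2; simpa using hd1.sub_const c
  have hN1 : HasDerivAt (fun k => stdNormalCdf (bsD1 S k T r q σ))
      (stdNormalPdf (bsD1 S K T r q σ) * (-K⁻¹ / c)) K :=
    (cdf_hasDeriv _).comp K hd1
  have hN2 : HasDerivAt (fun k => stdNormalCdf (bsD2 S k T r q σ))
      (stdNormalPdf (bsD2 S K T r q σ) * (-K⁻¹ / c)) K :=
    (cdf_hasDeriv _).comp K hd2
  have h1 : HasDerivAt (fun k => S * Real.exp (-q * T) * stdNormalCdf (bsD1 S k T r q σ))
      (S * Real.exp (-q * T) * (stdNormalPdf (bsD1 S K T r q σ) * (-K⁻¹ / c))) K :=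
    hN1.const_mul _
  have h2 : HasDerivAt (fun k => k * Real.exp (-r * T) * stdNormalCdf (bsD2 S k T r q σ))
      ((1 * Real.exp (-r * T)) * stdNormalCdf (bsD2 S K T r q σ) +
        (K * Real.exp (-r * T)) * (stdNormalPdf (bsD2 S K T r q σ) * (-K⁻¹ / c))) K :=
    ((hasDerivAt_id K).mul_const (Real.exp (-r * T))).mul hN2
  have h := h1.sub h2
  have hval : S * Real.exp (-q * T) * (stdNormalPdf (bsD1 S K T r q σ) * (-K⁻¹ / c)) -
      ((1 * Real.exp (-r * T)) * stdNormalCdf (bsD2 S K T r q σ) +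
        (K * Real.exp (-r * T)) * (stdNormalPdf (bsD2 S K T r q σ) * (-K⁻¹ / c))) =
      -(Real.exp (-r * T) * stdNormalCdf (bsD2 S K T r q σ)) := by
    have hid := bs_identity S T σ r q K hS hT hσ hK
    linear_combination (-K⁻¹ / c) * hid
  rw [← hval]
  exact h


/-- Butterfly-spread no-arbitrage condition for Black-Scholes call prices. -/
theorem bsCall_butterfly (S T σ r q : ℝ) (hS : 0 < S) (hT : 0 < T) (hσ : 0 < σ)
    (K1 K2 K3 : ℝ) (hK1 : 0 < K1) (h12 : K1 < K2) (h23 : K2 < K3) :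
    0 < (K3 - K2) * bsCall S K1 T r q σ - (K3 - K1) * bsCall S K2 T r q σ +
          (K2 - K1) * bsCall S K3 T r q σ := by
  have hcpos : 0 < σ * Real.sqrt T := mul_pos hσ (Real.sqrt_pos.2 hT)
  -- strict convexity of K ↦ bsCall on Ioi 0
  have hconv : StrictConvexOn ℝ (Set.Ioi (0:ℝ)) (fun k => bsCall S k T r q σ) := by
    apply StrictMonoOn.strictConvexOn_of_deriv (convex_Ioi 0)
    · intro k hk
      exact ((bsCall_hasDeriv S T σ r q hS hT hσ hk).continuousAt).continuousWithinAt
    · rw [interior_Ioi]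
      intro x hx y hy hxy
      rw [(bsCall_hasDeriv S T σ r q hS hT hσ hx).deriv,
        (bsCall_hasDeriv S T σ r q hS hT hσ hy).deriv]
      have hd2lt : bsD2 S y T r q σ < bsD2 S x T r q σ := by
        unfold bsD2 bsD1
        have hx' : (0:ℝ) < x := hx
        have hy' : (0:ℝ) < y := hy
        have : Real.log (S / y) < Real.log (S / x) := by
          apply Real.log_lt_log (div_pos hS hy')
          exact div_lt_div_of_pos_left hS hx' hxy
        have h1 : (Real.log (S / y) + (r - q + σ ^ 2 / 2) * T) / (σ * Real.sqrt T) <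
            (Real.log (S / x) + (r - q + σ ^ 2 / 2) * T) / (σ * Real.sqrt T) := by
          apply div_lt_div_of_pos_right ?_ hcpos
          · linarith
        linarith
      have := cdf_strictMono hd2lt
      have hE : 0 < Real.exp (-r * T) := Real.exp_pos _
      nlinarith
  -- apply strict convexity with weights
  have hD : (0:ℝ) < K3 - K1 := by linarith
  set lam := (K3 - K2) / (K3 - K1) with hlam
  set mu := (K2 - K1) / (K3 - K1) with hmu
  have hlampos : 0 < lam := by apply div_pos <;> linarith
  have hmupos : 0 < mu := by apply div_pos <;> linarith
  have hsum : lam + mu = 1 := by rw [hlam, hmu, ← add_div]; field_simp; ring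
  have hcomb : lam • K1 + mu • K3 = K2 := by
    rw [smul_eq_mul, smul_eq_mul, hlam, hmu]; field_simp; ring
  have h := hconv.2 (Set.mem_Ioi.2 hK1) (Set.mem_Ioi.2 (by linarith : (0:ℝ) < K3))
    (by linarith : K1 ≠ K3) hlampos hmupos hsum
  rw [hcomb, smul_eq_mul, smul_eq_mul, hlam, hmu] at h
  simp only at h
  rw [div_mul_eq_mul_div, div_mul_eq_mul_div, ← add_div, lt_div_iff₀ hD] at h
  nlinarith [h]
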